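/- Under the ROBE-Z setup with Z = 1 (feature hashing), for all x, y ∈ ℝⁿ the variance of the estimator Ŝ(x,y) equals (1/m)·( Σ_{i ≠ j} x_i² y_j² + Σ_{i ≠ j} x_i y_i x_j y_j ), where both sums range over ordered pairs of distinct indices i, j ∈ {0,…,n−1}. -/

import Mathlib

open Finset

noncomputable section

/-- Sign value of a Boolean: `true ↦ +1`, `false ↦ -1`. -/
def sgn (b : Bool) : ℝ := if b then 1 else -1

/-- The feature-hashing (ROBE-1) inner-product estimator `Ŝ(x,y)`, where the
location map is `idx i = h i`, as a function of the random sample `ω = (h, g)`. -/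
def est1 (n m : ℕ) (x y : Fin n → ℝ)
    (ω : (Fin n → Fin m) × (Fin n → Bool)) : ℝ :=
  ∑ j : Fin m,
    (∑ i : Fin n, x i * sgn (ω.2 i) * (if ω.1 i = j then 1 else 0)) *
    (∑ i : Fin n, y i * sgn (ω.2 i) * (if ω.1 i = j then 1 else 0))

/-- Expectation with respect to the uniform (product) measure on the finite
sample space of pairs `(h, g)`. -/
def expec1 (n m : ℕ) (f : ((Fin n → Fin m) × (Fin n → Bool)) → ℝ) : ℝ :=
  (∑ ω : (Fin n → Fin m) × (Fin n → Bool), f ω) /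
    (Fintype.card ((Fin n → Fin m) × (Fin n → Bool)))

/-- Variance of the feature-hashing estimator: `E[Ŝ²] - (E[Ŝ])²`. -/
def var1 (n m : ℕ) (x y : Fin n → ℝ) : ℝ :=
  expec1 n m (fun ω => (est1 n m x y ω) ^ 2) - (expec1 n m (est1 n m x y)) ^ 2


lemma sum_pi_prod {n : ℕ} {α : Type*} [Fintype α] (f : Fin n → α → ℝ) :
    ∑ g : Fin n → α, ∏ t, f t (g t) = ∏ t, ∑ a, f t a :=
  (Fintype.prod_sum f).symm

lemma sum_sgn_pow (c : ℕ) : ∑ b : Bool, sgn b ^ c = if Even c then 2 else 0 := by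
  simp [sgn]
  rcases Nat.even_or_odd c with h | h
  · simp [h, h.neg_one_pow]; norm_num
  · simp [h, Nat.not_even_iff_odd.2 h, h.neg_one_pow]

lemma sum_g_prod {n : ℕ} (c : Fin n → ℕ) :
    ∑ g : Fin n → Bool, ∏ t, sgn (g t) ^ c t = ∏ t, (if Even (c t) then (2:ℝ) else 0) := by
  rw [show (fun (g : Fin n → Bool) => ∏ t, sgn (g t) ^ c t) = fun g => ∏ t, (fun t a => sgn a ^ c t) t (g t) from rfl] at *
  rw [sum_pi_prod (fun t a => sgn a ^ c t)]
  exact Finset.prod_congr rfl fun t _ => sum_sgn_pow (c t)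

lemma sum_g_even {n : ℕ} (c : Fin n → ℕ) (h : ∀ t, Even (c t)) :
    ∑ g : Fin n → Bool, ∏ t, sgn (g t) ^ c t = 2 ^ n := by
  rw [sum_g_prod]
  rw [Finset.prod_congr rfl fun t _ => if_pos (h t)]
  simp

lemma sum_g_odd {n : ℕ} (c : Fin n → ℕ) (t0 : Fin n) (h : ¬ Even (c t0)) :
    ∑ g : Fin n → Bool, ∏ t, sgn (g t) ^ c t = 0 := by
  rw [sum_g_prod]
  exact Finset.prod_eq_zero (Finset.mem_univ t0) (if_neg h)

lemma sgn_rep {n : ℕ} (g : Fin n → Bool) (i : Fin n) :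
    sgn (g i) = ∏ t, sgn (g t) ^ (if t = i then 1 else 0) := by
  have : ∀ t ∈ Finset.univ, sgn (g t) ^ (if t = i then 1 else 0)
      = (if t = i then sgn (g t) else 1) := by
    intro t _; split <;> simp
  rw [Finset.prod_congr rfl this, Fintype.prod_ite_eq' i (fun t => sgn (g t))]

lemma sgn_rep4 {n : ℕ} (g : Fin n → Bool) (i k i' k' : Fin n) :
    sgn (g i) * sgn (g k) * sgn (g i') * sgn (g k') =
    ∏ t, sgn (g t) ^ ((if t = i then 1 else 0) + (if t = k then 1 else 0)
      + (if t = i' then 1 else 0) + (if t = k' then 1 else 0)) := by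
  simp only [pow_add, Finset.prod_mul_distrib, ← sgn_rep]


lemma two_le_of_ne {n : ℕ} {i k : Fin n} (hik : i ≠ k) : 2 ≤ n := by
  have := Fintype.one_lt_card_iff_nontrivial.mpr ⟨⟨i, k, hik⟩⟩
  simp at this; omega

lemma prod_two_special {n : ℕ} {i k : Fin n} (hik : i ≠ k) (c : ℝ) :
    ∏ t : Fin n, (if t = i ∨ t = k then 1 else c) = c ^ (n-2) := by
  have hki : k ∈ Finset.univ.erase i := Finset.mem_erase.mpr ⟨Ne.symm hik, Finset.mem_univ k⟩
  rw [← Finset.mul_prod_erase Finset.univ _ (Finset.mem_univ i),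
      ← Finset.mul_prod_erase _ _ hki]
  rw [if_pos (Or.inl rfl), if_pos (Or.inr rfl), one_mul, one_mul]
  have : ∀ t ∈ (Finset.univ.erase i).erase k, (if t = i ∨ t = k then (1:ℝ) else c) = c := by
    intro t ht
    rcases Finset.mem_erase.mp ht with ⟨htk, ht'⟩
    rcases Finset.mem_erase.mp ht' with ⟨hti, _⟩
    exact if_neg (by tauto)
  rw [Finset.prod_congr rfl this, Finset.prod_const]
  congr 1
  rw [Finset.card_erase_of_mem hki, Finset.card_erase_of_mem (Finset.mem_univ i)]
  simp only [Finset.card_univ, Fintype.card_fin]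
  omega

lemma sum_h_ne {n m : ℕ} (hm : 0 < m) {i k : Fin n} (hik : i ≠ k) :
    ∑ h : Fin n → Fin m, (if h i = h k then (1:ℝ) else 0) = (m:ℝ) ^ (n-1) := by
  have h2 : 2 ≤ n := two_le_of_ne hik
  have rep : ∀ h : Fin n → Fin m, (if h i = h k then (1:ℝ) else 0) =
      ∑ j : Fin m, ∏ t, ((if t = i then (if h t = j then (1:ℝ) else 0) else 1) *
        (if t = k then (if h t = j then 1 else 0) else 1)) := by
    intro h
    have : ∀ j : Fin m, (∏ t, ((if t = i then (if h t = j then (1:ℝ) else 0) else 1) *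
        (if t = k then (if h t = j then 1 else 0) else 1))) =
        (if h i = j then (1:ℝ) else 0) * (if h k = j then 1 else 0) := by
      intro j
      rw [Finset.prod_mul_distrib, Fintype.prod_ite_eq', Fintype.prod_ite_eq']
    rw [Finset.sum_congr rfl fun j _ => this j]
    by_cases hik' : h i = h k
    · rw [hik']
      simp
    · rw [if_neg hik']
      symm
      apply Finset.sum_eq_zero
      intro j _
      by_cases h1 : h i = j
      · rw [if_pos h1, if_neg (fun hh => hik' (h1.trans hh.symm)), mul_zero]
      · rw [if_neg h1, zero_mul]
  rw [Finset.sum_congr rfl fun h _ => rep h, Finset.sum_comm]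
  have inner : ∀ j : Fin m, (∑ h : Fin n → Fin m, ∏ t,
      ((if t = i then (if h t = j then (1:ℝ) else 0) else 1) *
        (if t = k then (if h t = j then 1 else 0) else 1))) = (m:ℝ) ^ (n-2) := by
    intro j
    rw [sum_pi_prod (fun t a => (if t = i then (if a = j then (1:ℝ) else 0) else 1) *
      (if t = k then (if a = j then 1 else 0) else 1))]
    have fval : ∀ t : Fin n, (∑ a : Fin m, (if t = i then (if a = j then (1:ℝ) else 0) else 1) *
        (if t = k then (if a = j then 1 else 0) else 1)) =
        if t = i ∨ t = k then 1 else (m:ℝ) := by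
      intro t
      by_cases hti : t = i
      · have htk : t ≠ k := fun h => hik (hti ▸ h ▸ rfl)
        simp [hti, htk, hik]
      · by_cases htk : t = k
        · simp [hti, htk]
        · simp [hti, htk]
    rw [Finset.prod_congr rfl fun t _ => fval t]
    exact prod_two_special hik (m:ℝ)
  rw [Finset.sum_congr rfl fun j _ => inner j, Finset.sum_const]
  simp only [Finset.card_univ, Fintype.card_fin, nsmul_eq_mul]
  rw [← pow_succ']
  congr 1
  omega

lemma card_omega (n m : ℕ) :
    ((Fintype.card ((Fin n → Fin m) × (Fin n → Bool))) : ℝ) = (m:ℝ)^n * 2^n := by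
  simp [Fintype.card_fun]

lemma expec_prod (n m : ℕ) (F : (Fin n → Fin m) → ℝ) (G : (Fin n → Bool) → ℝ) :
    expec1 n m (fun ω => F ω.1 * G ω.2) = (∑ h, F h) * (∑ g, G g) / ((m:ℝ)^n * 2^n) := by
  unfold expec1
  rw [Fintype.sum_prod_type, card_omega]
  congr 1
  rw [Finset.sum_mul_sum]

lemma expec_sum (n m : ℕ) {ι : Type*} (s : Finset ι)
    (f : ι → ((Fin n → Fin m) × (Fin n → Bool)) → ℝ) :
    expec1 n m (fun ω => ∑ i ∈ s, f i ω) = ∑ i ∈ s, expec1 n m (f i) := by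
  unfold expec1
  rw [Finset.sum_comm, Finset.sum_div]

lemma expec_const_mul (n m : ℕ) (c : ℝ) (f : ((Fin n → Fin m) × (Fin n → Bool)) → ℝ) :
    expec1 n m (fun ω => c * f ω) = c * expec1 n m f := by
  unfold expec1
  rw [← Finset.mul_sum, mul_div_assoc]

lemma expec_congr (n m : ℕ) (f g : ((Fin n → Fin m) × (Fin n → Bool)) → ℝ)
    (h : ∀ ω, f ω = g ω) : expec1 n m f = expec1 n m g := by
  unfold expec1
  rw [Finset.sum_congr rfl fun ω _ => h ω]

lemma sgn_rep2 {n : ℕ} (g : Fin n → Bool) (i k : Fin n) :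
    sgn (g i) * sgn (g k) =
    ∏ t, sgn (g t) ^ ((if t = i then 1 else 0) + (if t = k then 1 else 0)) := by
  simp only [pow_add, Finset.prod_mul_distrib, ← sgn_rep]

lemma sum_g2 {n : ℕ} (i k : Fin n) :
    ∑ g : Fin n → Bool, sgn (g i) * sgn (g k) = if i = k then (2:ℝ)^n else 0 := by
  rw [Finset.sum_congr rfl fun g _ => sgn_rep2 g i k]
  by_cases hik : i = k
  · subst hik
    rw [if_pos rfl]
    exact sum_g_even _ (fun t => ⟨if t = i then 1 else 0, by ring⟩)
  · rw [if_neg hik]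
    apply sum_g_odd _ i
    simp [hik]

lemma pow_pred_div {n m : ℕ} (hm : 0 < m) (hn : 1 ≤ n) :
    (m:ℝ) ^ (n-1) * 2^n / ((m:ℝ)^n * 2^n) = 1 / m := by
  have hm' : (m:ℝ) ≠ 0 := Nat.cast_ne_zero.mpr hm.ne'
  have h1 : (m:ℝ)^n = (m:ℝ)^(n-1) * m := by
    rw [← pow_succ]; congr 1; omega
  rw [h1]
  have h2 : (2:ℝ)^n ≠ 0 := by positivity
  have h3 : (m:ℝ)^(n-1) ≠ 0 := pow_ne_zero _ hm'
  field_simp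

lemma full_div {n m : ℕ} (hm : 0 < m) :
    ((m:ℝ)^n * 2^n) / ((m:ℝ)^n * 2^n) = 1 := by
  have hm' : (m:ℝ) ≠ 0 := Nat.cast_ne_zero.mpr hm.ne'
  have h2 : (2:ℝ)^n ≠ 0 := by positivity
  have h3 : (m:ℝ)^n ≠ 0 := pow_ne_zero _ hm'
  field_simp

lemma key2 {n m : ℕ} (hm : 0 < m) (i k : Fin n) :
    expec1 n m (fun ω => (if ω.1 i = ω.1 k then (1:ℝ) else 0) *
      (sgn (ω.2 i) * sgn (ω.2 k))) = if i = k then 1 else 0 := by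
  rw [expec_prod n m (fun h => if h i = h k then (1:ℝ) else 0)
    (fun g => sgn (g i) * sgn (g k)), sum_g2]
  by_cases hik : i = k
  · subst hik
    rw [if_pos rfl, if_pos rfl]
    have : (∑ h : Fin n → Fin m, if h i = h i then (1:ℝ) else 0) = (m:ℝ)^n := by
      simp [Fintype.card_fun]
    rw [this, full_div hm]
  · rw [if_neg hik, if_neg hik, mul_zero, zero_div]

lemma key4 {n m : ℕ} (hm : 0 < m) (i k i' k' : Fin n) :
    expec1 n m (fun ω => ((if ω.1 i = ω.1 k then (1:ℝ) else 0) *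
        (if ω.1 i' = ω.1 k' then 1 else 0)) *
      (sgn (ω.2 i) * sgn (ω.2 k) * sgn (ω.2 i') * sgn (ω.2 k'))) =
    (if i = k ∧ i' = k' then 1 else 0) +
      (1/m) * ((if i = i' ∧ k = k' ∧ i ≠ k then 1 else 0) +
               (if i = k' ∧ k = i' ∧ i ≠ k then 1 else 0)) := by
  rw [expec_prod n m (fun h => (if h i = h k then (1:ℝ) else 0) *
      (if h i' = h k' then 1 else 0))
    (fun g => sgn (g i) * sgn (g k) * sgn (g i') * sgn (g k'))]
  rw [Finset.sum_congr rfl fun g _ => sgn_rep4 g i k i' k']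
  by_cases h1 : i = k
  · by_cases h2 : i' = k'
    · subst h1; subst h2
      rw [sum_g_even _ (fun t => ⟨(if t = i then 1 else 0) + (if t = i' then 1 else 0),
        by ring⟩)]
      have hs : (∑ h : Fin n → Fin m, (if h i = h i then (1:ℝ) else 0) *
          (if h i' = h i' then 1 else 0)) = (m:ℝ)^n := by
        simp [Fintype.card_fun]
      rw [hs, full_div hm]
      norm_num
    · subst h1
      rw [sum_g_odd _ i' (by
        by_cases e : i' = i
        · rw [if_pos e, if_pos rfl, if_neg h2]; decide
        · rw [if_neg e, if_pos rfl, if_neg h2]; decide)]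
      rw [mul_zero, zero_div]
      rw [if_neg (fun hc => h2 hc.2), if_neg (fun hc => hc.2.2 rfl),
        if_neg (fun hc => hc.2.2 rfl)]
      ring
  · by_cases h3 : i = i'
    · by_cases h4 : k = k'
      · subst h3; subst h4
        rw [sum_g_even _ (fun t => ⟨(if t = i then 1 else 0) + (if t = k then 1 else 0),
          by ring⟩)]
        have hs : (∑ h : Fin n → Fin m, (if h i = h k then (1:ℝ) else 0) *
            (if h i = h k then 1 else 0)) = (m:ℝ)^(n-1) := by
          have : ∀ h : Fin n → Fin m, (if h i = h k then (1:ℝ) else 0) *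
              (if h i = h k then 1 else 0) = (if h i = h k then 1 else 0) := by
            intro h; by_cases e : h i = h k <;> simp [e]
          rw [Finset.sum_congr rfl fun h _ => this h]
          exact sum_h_ne hm h1
        rw [hs, pow_pred_div hm (by have := two_le_of_ne h1; omega)]
        rw [if_neg (fun hc => h1 hc.1), if_pos ⟨rfl, rfl, h1⟩,
          if_neg (fun hc => h1 hc.2.1.symm)]
        ring
      · subst h3
        rw [sum_g_odd _ k (by simp [Ne.symm h1, h4])]
        rw [mul_zero, zero_div]
        rw [if_neg (fun hc => h1 hc.1), if_neg (fun hc => h4 hc.2.1),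
          if_neg (fun hc => h1 hc.2.1.symm)]
        ring
    · by_cases h5 : i = k'
      · by_cases h6 : k = i'
        · subst h5; subst h6
          rw [sum_g_even _ (fun t => ⟨(if t = i then 1 else 0) + (if t = k then 1 else 0),
            by ring⟩)]
          have hs : (∑ h : Fin n → Fin m, (if h i = h k then (1:ℝ) else 0) *
              (if h k = h i then 1 else 0)) = (m:ℝ)^(n-1) := by
            have : ∀ h : Fin n → Fin m, (if h i = h k then (1:ℝ) else 0) *
                (if h k = h i then 1 else 0) = (if h i = h k then 1 else 0) := by
              intro h; by_cases e : h i = h k <;> simp [e, eq_comm]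
            rw [Finset.sum_congr rfl fun h _ => this h]
            exact sum_h_ne hm h1
          rw [hs, pow_pred_div hm (by have := two_le_of_ne h1; omega)]
          rw [if_neg (fun hc => h1 hc.1), if_neg (fun hc => h1 hc.1),
            if_pos ⟨rfl, rfl, h1⟩]
          ring
        · subst h5
          rw [sum_g_odd _ k (by simp [Ne.symm h1, h6])]
          rw [mul_zero, zero_div]
          rw [if_neg (fun hc => h1 hc.1), if_neg (fun hc => h1 hc.2.1.symm),
            if_neg (fun hc => h6 hc.2.1)]
          ring
      · rw [sum_g_odd _ i (by simp [h1, h3, h5])]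
        rw [mul_zero, zero_div]
        rw [if_neg (fun hc => h1 hc.1), if_neg (fun hc => h3 hc.1),
          if_neg (fun hc => h5 hc.1)]
        ring



lemma est_eq (n m : ℕ) (x y : Fin n → ℝ) (ω : (Fin n → Fin m) × (Fin n → Bool)) :
    est1 n m x y ω = ∑ i, ∑ k, (x i * y k) *
      ((if ω.1 i = ω.1 k then (1:ℝ) else 0) * (sgn (ω.2 i) * sgn (ω.2 k))) := by
  obtain ⟨h, g⟩ := ω
  unfold est1
  simp only
  rw [Finset.sum_congr rfl (fun j _ => Finset.sum_mul_sum Finset.univ Finset.univ _ _)]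
  rw [Finset.sum_comm]
  refine Finset.sum_congr rfl fun i _ => ?_
  rw [Finset.sum_comm]
  refine Finset.sum_congr rfl fun k _ => ?_
  have e1 : ∀ j, (x i * sgn (g i) * (if h i = j then (1:ℝ) else 0)) *
      (y k * sgn (g k) * (if h k = j then 1 else 0)) =
      (x i * y k * (sgn (g i) * sgn (g k))) *
        ((if h i = j then 1 else 0) * (if h k = j then 1 else 0)) := fun j => by ring
  rw [Finset.sum_congr rfl fun j _ => e1 j, ← Finset.mul_sum]
  have e2 : (∑ j, (if h i = j then (1:ℝ) else 0) * (if h k = j then 1 else 0)) =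
      (if h i = h k then 1 else 0) := by
    by_cases e : h i = h k
    · rw [e]; simp
    · rw [if_neg e]
      apply Finset.sum_eq_zero
      intro j _
      by_cases e1 : h i = j
      · rw [if_pos e1, if_neg (fun hh => e (e1.trans hh.symm)), mul_zero]
      · rw [if_neg e1, zero_mul]
  rw [e2]; ring

lemma expec_est (n m : ℕ) (hm : 0 < m) (x y : Fin n → ℝ) :
    expec1 n m (est1 n m x y) = ∑ i, x i * y i := by
  rw [expec_congr n m _ _ (est_eq n m x y)]
  rw [expec_sum]
  refine Finset.sum_congr rfl fun i _ => ?_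
  rw [expec_sum]
  have : ∀ k, expec1 n m (fun ω => (x i * y k) *
      ((if ω.1 i = ω.1 k then (1:ℝ) else 0) * (sgn (ω.2 i) * sgn (ω.2 k)))) =
      (x i * y k) * (if i = k then 1 else 0) := by
    intro k
    rw [expec_const_mul, key2 hm]
  rw [Finset.sum_congr rfl fun k _ => this k]
  have : ∀ k, (x i * y k) * (if i = k then (1:ℝ) else 0) =
      (if i = k then x i * y k else 0) := by
    intro k; by_cases e : i = k <;> simp [e]
  rw [Finset.sum_congr rfl fun k _ => this k, Finset.sum_ite_eq]
  simp

lemma expec_sq (n m : ℕ) (hm : 0 < m) (x y : Fin n → ℝ) :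
    expec1 n m (fun ω => (est1 n m x y ω)^2) =
    ∑ i, ∑ i', ∑ k, ∑ k', (x i * y k * (x i' * y k')) *
      ((if i = k ∧ i' = k' then (1:ℝ) else 0) +
        (1/m) * ((if i = i' ∧ k = k' ∧ i ≠ k then 1 else 0) +
                 (if i = k' ∧ k = i' ∧ i ≠ k then 1 else 0))) := by
  have e1 : ∀ ω : (Fin n → Fin m) × (Fin n → Bool),
      (est1 n m x y ω)^2 = ∑ i, ∑ i', ∑ k, ∑ k',
        ((x i * y k * (x i' * y k')) *
          (((if ω.1 i = ω.1 k then (1:ℝ) else 0) * (if ω.1 i' = ω.1 k' then 1 else 0)) *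
           (sgn (ω.2 i) * sgn (ω.2 k) * sgn (ω.2 i') * sgn (ω.2 k')))) := by
    intro ω
    rw [est_eq n m x y ω, sq, Finset.sum_mul_sum]
    refine Finset.sum_congr rfl fun i _ => ?_
    refine Finset.sum_congr rfl fun i' _ => ?_
    rw [Finset.sum_mul_sum]
    refine Finset.sum_congr rfl fun k _ => ?_
    refine Finset.sum_congr rfl fun k' _ => ?_
    ring
  rw [expec_congr n m _ _ e1]
  rw [expec_sum]
  refine Finset.sum_congr rfl fun i _ => ?_
  rw [expec_sum]
  refine Finset.sum_congr rfl fun i' _ => ?_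
  rw [expec_sum]
  refine Finset.sum_congr rfl fun k _ => ?_
  rw [expec_sum]
  refine Finset.sum_congr rfl fun k' _ => ?_
  rw [expec_const_mul, key4 hm]

lemma SA_eq (n : ℕ) (x y : Fin n → ℝ) :
    (∑ i, ∑ i', ∑ k, ∑ k', (x i * y k * (x i' * y k')) *
      (if i = k ∧ i' = k' then (1:ℝ) else 0)) = (∑ i, x i * y i)^2 := by
  rw [sq, Finset.sum_mul_sum]
  refine Finset.sum_congr rfl fun i _ => Finset.sum_congr rfl fun i' _ => ?_
  have e : ∀ k k' : Fin n, (x i * y k * (x i' * y k')) *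
      (if i = k ∧ i' = k' then (1:ℝ) else 0) =
      (if i = k then x i * y k else 0) * (if i' = k' then x i' * y k' else 0) := by
    intro k k'
    by_cases a : i = k <;> by_cases b : i' = k' <;> simp [a, b]
  rw [Finset.sum_congr rfl fun k _ => Finset.sum_congr rfl fun k' _ => e k k']
  rw [← Finset.sum_mul_sum, Finset.sum_ite_eq, Finset.sum_ite_eq]
  simp

lemma SB_eq (n : ℕ) (x y : Fin n → ℝ) :
    (∑ i, ∑ i', ∑ k, ∑ k', (x i * y k * (x i' * y k')) *
      (if i = i' ∧ k = k' ∧ i ≠ k then (1:ℝ) else 0)) =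
    ∑ i, ∑ j, (if i ≠ j then x i ^ 2 * y j ^ 2 else 0) := by
  refine Finset.sum_congr rfl fun i _ => ?_
  rw [Finset.sum_comm]
  refine Finset.sum_congr rfl fun k _ => ?_
  by_cases hik : i = k
  · simp [hik]
  · rw [if_pos hik]
    have e : ∀ i' k' : Fin n, (x i * y k * (x i' * y k')) *
        (if i = i' ∧ k = k' ∧ i ≠ k then (1:ℝ) else 0) =
        (if i = i' then (if k = k' then x i * y k * (x i' * y k') else 0) else 0) := by
      intro i' k'
      by_cases a : i = i'
      · by_cases b : k = k'
        · rw [if_pos ⟨a, b, hik⟩, if_pos a, if_pos b, mul_one]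
        · rw [if_neg (fun hc => b hc.2.1), if_pos a, if_neg b, mul_zero]
      · rw [if_neg (fun hc => a hc.1), if_neg a, mul_zero]
    rw [Finset.sum_congr rfl fun i' _ => Finset.sum_congr rfl fun k' _ => e i' k']
    have e2 : ∀ i' : Fin n, (∑ k' : Fin n, if i = i' then
        (if k = k' then x i * y k * (x i' * y k') else 0) else 0) =
        (if i = i' then x i * y k * (x i' * y k) else 0) := by
      intro i'
      by_cases a : i = i'
      · simp only [if_pos a, Finset.sum_ite_eq, Finset.mem_univ, if_true]
      · simp [a]
    rw [Finset.sum_congr rfl fun i' _ => e2 i', Finset.sum_ite_eq]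
    simp only [Finset.mem_univ, if_true]
    ring
  
lemma SC_eq (n : ℕ) (x y : Fin n → ℝ) :
    (∑ i, ∑ i', ∑ k, ∑ k', (x i * y k * (x i' * y k')) *
      (if i = k' ∧ k = i' ∧ i ≠ k then (1:ℝ) else 0)) =
    ∑ i, ∑ j, (if i ≠ j then x i * y i * x j * y j else 0) := by
  refine Finset.sum_congr rfl fun i _ => ?_
  rw [Finset.sum_comm]
  refine Finset.sum_congr rfl fun k _ => ?_
  by_cases hik : i = k
  · simp [hik]
  · rw [if_pos hik]
    have e : ∀ i' k' : Fin n, (x i * y k * (x i' * y k')) *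
        (if i = k' ∧ k = i' ∧ i ≠ k then (1:ℝ) else 0) =
        (if k = i' then (if i = k' then x i * y k * (x i' * y k') else 0) else 0) := by
      intro i' k'
      by_cases a : k = i'
      · by_cases b : i = k'
        · rw [if_pos ⟨b, a, hik⟩, if_pos a, if_pos b, mul_one]
        · rw [if_neg (fun hc => b hc.1), if_pos a, if_neg b, mul_zero]
      · rw [if_neg (fun hc => a hc.2.1), if_neg a, mul_zero]
    rw [Finset.sum_congr rfl fun i' _ => Finset.sum_congr rfl fun k' _ => e i' k']
    have e2 : ∀ i' : Fin n, (∑ k' : Fin n, if k = i' then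
        (if i = k' then x i * y k * (x i' * y k') else 0) else 0) =
        (if k = i' then x i * y k * (x i' * y i) else 0) := by
      intro i'
      by_cases a : k = i'
      · simp only [if_pos a, Finset.sum_ite_eq, Finset.mem_univ, if_true]
      · simp [a]
    rw [Finset.sum_congr rfl fun i' _ => e2 i', Finset.sum_ite_eq]
    simp only [Finset.mem_univ, if_true]
    ring


/-- For feature hashing (ROBE-Z with Z = 1), the variance of
the estimator equals `(1/m)·(Σ_{i≠j} x_i² y_j² + Σ_{i≠j} x_i y_i x_j y_j)`. -/
theorem feature_hashing_variance (n m : ℕ) (hn : 0 < n) (hm : 0 < m) (hmn : m ≤ n)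
    (x y : Fin n → ℝ) :
    var1 n m x y =
      (1 / (m : ℝ)) *
        ((∑ i : Fin n, ∑ j : Fin n, if i ≠ j then x i ^ 2 * y j ^ 2 else 0) +
         (∑ i : Fin n, ∑ j : Fin n, if i ≠ j then x i * y i * x j * y j else 0)) := by
  unfold var1
  rw [expec_est n m hm x y, expec_sq n m hm x y]
  have split : ∀ i i' k k' : Fin n, (x i * y k * (x i' * y k')) *
      ((if i = k ∧ i' = k' then (1:ℝ) else 0) +
        (1/m) * ((if i = i' ∧ k = k' ∧ i ≠ k then 1 else 0) +
                 (if i = k' ∧ k = i' ∧ i ≠ k then 1 else 0))) =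
      (x i * y k * (x i' * y k')) * (if i = k ∧ i' = k' then (1:ℝ) else 0) +
      ((1/m) * ((x i * y k * (x i' * y k')) * (if i = i' ∧ k = k' ∧ i ≠ k then 1 else 0)) +
       (1/m) * ((x i * y k * (x i' * y k')) * (if i = k' ∧ k = i' ∧ i ≠ k then 1 else 0))) :=
    fun i i' k k' => by ring
  simp only [split, Finset.sum_add_distrib, ← Finset.mul_sum]
  rw [SA_eq n x y, SB_eq n x y, SC_eq n x y]
  ring
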